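/- Let G be a finite π-separable group with O_{π'}(G) = 1 and O_π(G) ≠ G. Then ε_π(G) ≥ ε_π(G/O_π(G)) + 1. -/

import Mathlib

/-- `n` is a `π`-number: every prime divisor of `n` lies in `π`. -/
def IsPiNumber (π : Finset ℕ) (n : ℕ) : Prop := ∀ p : ℕ, p.Prime → p ∣ n → p ∈ π

/-- `n` is a `π'`-number: no prime divisor of `n` lies in `π`. -/
def IsPiPrimeNumber (π : Finset ℕ) (n : ℕ) : Prop := ∀ p : ℕ, p.Prime → p ∣ n → p ∉ π

/-- The `π`-exponent of `n`: the sum of the exponents of the primes of `π`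
in the factorization of `n` (so `p₁^{k₁}⋯p_s^{k_s}` is the `π`-part of `n`
and the `π`-exponent is `k₁ + ⋯ + k_s`). -/
def piExp (π : Finset ℕ) (n : ℕ) : ℕ :=
  ∑ p ∈ n.primeFactors.filter (· ∈ π), n.factorization p

/-- `ε_π(G)`: the largest `π`-exponent of a conjugacy class size in `G`. -/
noncomputable def epsPi (π : Finset ℕ) (G : Type*) [Group G] : ℕ :=
  sSup {k | ∃ x : G, piExp π (Subgroup.centralizer {x}).index = k}

/-- A group is `π`-separable if it has a normal series each of whose factors
is a `π`-group or a `π'`-group. -/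
def PiSeparable (π : Finset ℕ) (G : Type*) [Group G] : Prop :=
  ∃ (n : ℕ) (H : ℕ → Subgroup G), H 0 = ⊥ ∧ H n = ⊤ ∧
    (∀ i, H i ≤ H (i + 1)) ∧ (∀ i, (H i).Normal) ∧
    ∀ i < n,
      IsPiNumber π (Nat.card (↥(H (i + 1)) ⧸ (H i).subgroupOf (H (i + 1)))) ∨
      IsPiPrimeNumber π (Nat.card (↥(H (i + 1)) ⧸ (H i).subgroupOf (H (i + 1))))

namespace EpsPiAux

/-! ### Arithmetic lemmas about `piExp` -/

lemma piExp_eq_sum (π : Finset ℕ) (n : ℕ) : piExp π n = ∑ p ∈ π, n.factorization p := by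
  rw [piExp, Finset.filter_mem_eq_inter, Finset.inter_comm, ← Finset.filter_mem_eq_inter]
  exact Finset.sum_filter_of_ne fun p _ h =>
    Nat.support_factorization n ▸ Finsupp.mem_support_iff.mpr h

lemma piExp_mul (π : Finset ℕ) {a b : ℕ} (ha : a ≠ 0) (hb : b ≠ 0) :
    piExp π (a * b) = piExp π a + piExp π b := by
  simp only [piExp_eq_sum, Nat.factorization_mul ha hb, Finsupp.add_apply,
    Finset.sum_add_distrib]

lemma piExp_le_of_dvd (π : Finset ℕ) {a b : ℕ} (h : a ∣ b) (hb : b ≠ 0) :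
    piExp π a ≤ piExp π b := by
  obtain ⟨c, rfl⟩ := h
  have ha : a ≠ 0 := by rintro rfl; simp at hb
  have hc : c ≠ 0 := by rintro rfl; simp at hb
  rw [piExp_mul π ha hc]; omega

lemma one_le_piExp (π : Finset ℕ) {p n : ℕ} (hp : p.Prime) (hpπ : p ∈ π) (hpd : p ∣ n)
    (hn : n ≠ 0) : 1 ≤ piExp π n := by
  rw [piExp_eq_sum]
  calc 1 ≤ n.factorization p := Nat.Prime.factorization_pos_of_dvd hp hn hpd
    _ ≤ _ := Finset.single_le_sum (f := fun q => n.factorization q)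
          (fun _ _ => Nat.zero_le _) hpπ

lemma isPiNumber_of_dvd (π : Finset ℕ) {a b : ℕ} (h : a ∣ b) (hb : IsPiNumber π b) :
    IsPiNumber π a := fun p hp hpd => hb p hp (hpd.trans h)

lemma isPiPrimeNumber_of_dvd (π : Finset ℕ) {a b : ℕ} (h : a ∣ b) (hb : IsPiPrimeNumber π b) :
    IsPiPrimeNumber π a := fun p hp hpd => hb p hp (hpd.trans h)

lemma isPiNumber_mul (π : Finset ℕ) {a b : ℕ} (ha : IsPiNumber π a) (hb : IsPiNumber π b) :
    IsPiNumber π (a * b) := fun p hp hpd =>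
  ((Nat.Prime.dvd_mul hp).mp hpd).elim (ha p hp) (hb p hp)

lemma coprime_of_pi_pi' (π : Finset ℕ) {a b : ℕ} (ha : IsPiNumber π a)
    (hb : IsPiPrimeNumber π b) : Nat.Coprime a b := by
  by_contra h
  obtain ⟨p, hp, hpd⟩ := Nat.exists_prime_and_dvd (h : Nat.gcd a b ≠ 1)
  exact hb p hp (hpd.trans (Nat.gcd_dvd_right a b)) (ha p hp (hpd.trans (Nat.gcd_dvd_left a b)))

lemma one_le_piExp_of_pi (π : Finset ℕ) {n : ℕ} (hn : IsPiNumber π n) (h0 : n ≠ 0) (h1 : n ≠ 1) :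
    1 ≤ piExp π n := by
  obtain ⟨p, hp, hpd⟩ := Nat.exists_prime_and_dvd h1
  exact one_le_piExp π hp (hn p hp hpd) hpd h0

/-! ### Group-theoretic lemmas -/

open Subgroup

lemma card_eq_card_mul_relindex {G : Type*} [Group G] {H K : Subgroup G} (h : H ≤ K) :
    Nat.card K = Nat.card H * H.relIndex K := by
  rw [relIndex, ← Subgroup.card_mul_index (H.subgroupOf K),
    Nat.card_congr (Subgroup.subgroupOfEquivOfLe h).toEquiv]

lemma centralizer_normal {G : Type*} [Group G] (P : Subgroup G) [hP : P.Normal] :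
    (Subgroup.centralizer (P : Set G)).Normal := by
  constructor
  intro c hc g
  rw [Subgroup.mem_centralizer_iff] at hc ⊢
  intro p hp
  have hmem : g⁻¹ * p * g ∈ P := by simpa using hP.conj_mem p hp g⁻¹
  have h := hc (g⁻¹ * p * g) hmem
  calc p * (g * c * g⁻¹) = g * (g⁻¹ * p * g * c) * g⁻¹ := by group
    _ = g * (c * (g⁻¹ * p * g)) * g⁻¹ := by rw [h]
    _ = g * c * g⁻¹ * p := by group

lemma exists_step {α : Type*} (f : ℕ → α) (n : ℕ) (z : α) (h0 : f 0 = z) (hn : f n ≠ z) :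
    ∃ i < n, f i = z ∧ f (i + 1) ≠ z := by
  induction n with
  | zero => exact absurd h0 hn
  | succ n ih =>
    by_cases h : f n = z
    · exact ⟨n, Nat.lt_succ_self n, h, hn⟩
    · obtain ⟨i, hi, h1, h2⟩ := ih h
      exact ⟨i, hi.trans (Nat.lt_succ_self n), h1, h2⟩

/-- The Hall–Higman lemma: in a π-separable group with trivial `O_{π'}`,
the centralizer of `O_π` is contained in `O_π`. -/
lemma hall_higman {G : Type*} [Group G] [Finite G] (π : Finset ℕ)
    (hsep : PiSeparable π G)
    (hOpi' : ∀ K : Subgroup G, K.Normal → IsPiPrimeNumber π (Nat.card K) → K = ⊥)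
    (P : Subgroup G) [hPn : P.Normal] (hPpi : IsPiNumber π (Nat.card P))
    (hPmax : ∀ K : Subgroup G, K.Normal → IsPiNumber π (Nat.card K) → K ≤ P) :
    Subgroup.centralizer (P : Set G) ≤ P := by
  by_contra hnot
  set C := Subgroup.centralizer (P : Set G) with hCdef
  haveI hCn : C.Normal := centralizer_normal P
  set Z := C ⊓ P with hZdef
  haveI hZn : Z.Normal := Subgroup.normal_inf_normal C P
  have hZC : Z ≤ C := inf_le_left
  have hZP : Z ≤ P := inf_le_right
  obtain ⟨n, H, h0, hn, hmono, hnorm, hfac⟩ := hsep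
  haveI := fun i => hnorm i
  set K : ℕ → Subgroup G := fun i => (H i ⊓ C) ⊔ Z with hKdef
  have hK0 : K 0 = Z := by simp [hKdef, h0]
  have hKn : K n ≠ Z := by
    have : K n = C := by
      simp only [hKdef, hn, top_inf_eq]
      exact sup_eq_left.mpr hZC
    rw [this]
    intro hEq
    exact hnot (le_of_eq_of_le hEq hZP)
  obtain ⟨i, hin, hKi, hKi1⟩ := exists_step K n Z hK0 hKn
  set A := H (i + 1) ⊓ C with hAdef
  haveI hAn : A.Normal := Subgroup.normal_inf_normal _ _
  set D := A ⊔ Z with hDdef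
  haveI hDn : D.Normal := Subgroup.sup_normal A Z
  have hDK : D = K (i + 1) := rfl
  have hZD : Z ≤ D := le_sup_right
  have hDC : D ≤ C := sup_le inf_le_right hZC
  have hDZ : D ≠ Z := hDK ▸ hKi1
  have hHiCZ : H i ⊓ C ≤ Z := le_sup_left.trans hKi.le
  -- key divisibility: `|D : Z|` divides the order of the `i`-th factor of the series
  have hdvd : Z.relIndex D ∣ Nat.card (↥(H (i + 1)) ⧸ (H i).subgroupOf (H (i + 1))) := by
    have e1 : Z.relIndex D = Z.relIndex A := relIndex_sup_right A Z
    have e2 : Z.relIndex A ∣ (H i ⊓ C).relIndex A := relIndex_dvd_of_le_left A hHiCZ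
    have e3 : (H i ⊓ C).relIndex A = (H i).relIndex A := by
      rw [← inf_relIndex_right (H i ⊓ C) A, ← inf_relIndex_right (H i) A, inf_assoc,
        inf_eq_right.mpr (inf_le_right : A ≤ C)]
    have e4 : (H i).relIndex A ∣ Nat.card (↥(H (i + 1)) ⧸ (H i).subgroupOf (H (i + 1))) := by
      rw [← relIndex_subgroupOf (inf_le_left : A ≤ H (i + 1)), ← Subgroup.index_eq_card]
      exact relIndex_dvd_index_of_normal _ _
    rw [e1]
    exact (e2.trans (e3 ▸ dvd_refl _)).trans e4
  have hrel1 : Z.relIndex D ≠ 1 := by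
    rw [Ne, relIndex_eq_one]
    intro hDle
    exact hDZ (le_antisymm hDle hZD)
  have hcardZpi : IsPiNumber π (Nat.card Z) :=
    isPiNumber_of_dvd π (card_dvd_of_le hZP) hPpi
  rcases hfac i hin with hpi | hpi'
  · -- the factor is a π-number: then `D` is a normal π-subgroup, contradiction
    have h1 : IsPiNumber π (Z.relIndex D) := isPiNumber_of_dvd π hdvd hpi
    have h3 : IsPiNumber π (Nat.card D) := by
      rw [card_eq_card_mul_relindex hZD]
      exact isPiNumber_mul π hcardZpi h1
    have h5 : D ≤ Z := le_inf hDC (hPmax D hDn h3)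
    exact hDZ (le_antisymm h5 hZD)
  · -- the factor is a π'-number: Schur–Zassenhaus produces a normal π'-subgroup
    have h1 : IsPiPrimeNumber π (Z.relIndex D) := isPiPrimeNumber_of_dvd π hdvd hpi'
    have hcardZ : Nat.card (Z.subgroupOf D) = Nat.card Z :=
      Nat.card_congr (Subgroup.subgroupOfEquivOfLe hZD).toEquiv
    have hcop : Nat.Coprime (Nat.card (Z.subgroupOf D)) (Z.subgroupOf D).index := by
      rw [hcardZ]
      exact coprime_of_pi_pi' π hcardZpi h1
    obtain ⟨H', hH'⟩ := Subgroup.exists_right_complement'_of_coprime hcop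
    set Q : Subgroup G := H'.map D.subtype with hQdef
    have hQD : Q ≤ D := map_subtype_le H'
    have hcardQ : Nat.card Q = Z.relIndex D := by
      have := (hH'.symm).index_eq_card
      rw [← (Nat.card_congr (Subgroup.equivMapOfInjective H' D.subtype
        D.subtype_injective).toEquiv), ← this]
      rfl
    have hQpi' : IsPiPrimeNumber π (Nat.card Q) := hcardQ ▸ h1
    -- `Q` is exactly the set of elements of `D` of π'-order, hence normal in `G`
    have hmemQ : ∀ d : G, d ∈ D → IsPiPrimeNumber π (orderOf d) → d ∈ Q := by
      intro d hd hord
      obtain ⟨⟨z, q⟩, hzq, -⟩ := hH'.existsUnique (⟨d, hd⟩ : ↥D)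
      have hzZ : ((z : ↥D) : G) ∈ Z := z.2
      have hqQ : ((q : ↥D) : G) ∈ Q := ⟨(q : ↥D), q.2, rfl⟩
      have hdzq : d = ((z : ↥D) : G) * ((q : ↥D) : G) := by
        have : (((z : ↥D) * (q : ↥D) : ↥D) : G) = ((⟨d, hd⟩ : ↥D) : G) := by rw [hzq]
        simpa using this.symm
      have hcomm : ((z : ↥D) : G) * ((q : ↥D) : G) = ((q : ↥D) : G) * ((z : ↥D) : G) := by
        have hqC : ((q : ↥D) : G) ∈ C := hDC (q : ↥D).2
        exact (Subgroup.mem_centralizer_iff.mp hqC _ (hZP hzZ))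
      have hm : ((z : ↥D) : G) ^ Nat.card Z = 1 :=
        orderOf_dvd_iff_pow_eq_one.mp (Subgroup.orderOf_dvd_natCard Z hzZ)
      have hdm : d ^ Nat.card Z ∈ Q := by
        rw [hdzq, (Commute.mul_pow hcomm : _), hm, one_mul]
        exact pow_mem hqQ _
      have hcop2 : (Nat.card Z).Coprime (orderOf d) := coprime_of_pi_pi' π hcardZpi hord
      obtain ⟨k, hk⟩ := exists_pow_eq_self_of_coprime hcop2
      rw [← hk]
      exact pow_mem hdm k
    have hQnormal : Q.Normal := by
      constructor
      intro q hq g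
      apply hmemQ
      · exact hDn.conj_mem q (hQD hq) g
      · have hsc : SemiconjBy g q (g * q * g⁻¹) := by
          unfold SemiconjBy; group
        rw [← SemiconjBy.orderOf_eq g hsc]
        exact isPiPrimeNumber_of_dvd π (Subgroup.orderOf_dvd_natCard Q hq) hQpi'
    have hbot : Q = ⊥ := hOpi' Q hQnormal hQpi'
    rw [hbot, Subgroup.card_bot] at hcardQ
    exact hrel1 hcardQ.symm

/-- The key counting step: for `x ∉ P = O_π(G)`, the π-exponent of the class size of `x`
exceeds that of the class size of its image in `G/P`. -/
lemma main_step {G : Type*} [Group G] [Finite G] (π : Finset ℕ) (P : Subgroup G) [P.Normal]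
    (hPpi : IsPiNumber π (Nat.card P))
    (hHH : Subgroup.centralizer (P : Set G) ≤ P)
    (x : G) (hx : x ∉ P) :
    piExp π (Subgroup.centralizer {(↑x : G ⧸ P)}).index + 1
      ≤ piExp π (Subgroup.centralizer ({x} : Set G)).index := by
  set C := Subgroup.centralizer ({x} : Set G) with hCdef
  set S := C ⊔ P with hSdef
  have hCS : C ≤ S := le_sup_left
  have hPS : P ≤ S := le_sup_right
  have hSidx0 : S.index ≠ 0 := S.index_ne_zero_of_finite
  have hCidx0 : C.index ≠ 0 := C.index_ne_zero_of_finite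
  have hrel0 : C.relIndex S ≠ 0 := fun h =>
    hCidx0 (Subgroup.index_eq_zero_of_relIndex_eq_zero h)
  have hdec : C.index = C.relIndex S * S.index := (relIndex_mul_index hCS).symm
  -- the relative index `|S : C| = |P : C ⊓ P|` is a nontrivial π-number
  have hPC : ¬ P ≤ C := by
    intro hle
    apply hx
    apply hHH
    rw [Subgroup.mem_centralizer_iff]
    intro p hp
    exact (hle hp x rfl).symm
  have hrel1 : C.relIndex S ≠ 1 := by
    rw [Ne, relIndex_eq_one]
    intro hle
    exact hPC (hPS.trans hle)
  have hreldvd : C.relIndex S ∣ Nat.card P := by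
    have e1 : Nat.card S = Nat.card C * C.relIndex S := card_eq_card_mul_relindex hCS
    have e2 : Nat.card S = Nat.card P * P.relIndex S := card_eq_card_mul_relindex hPS
    have e3 : P.relIndex S = P.relIndex C := relIndex_sup_right C P
    have e4 : Nat.card C = Nat.card (C ⊓ P : Subgroup G) * (C ⊓ P).relIndex C :=
      card_eq_card_mul_relindex inf_le_left
    have e5 : (C ⊓ P).relIndex C = P.relIndex C := by
      rw [inf_comm, inf_relIndex_right]
    have hPrel0 : P.relIndex C ≠ 0 := by
      intro h
      exact P.index_ne_zero_of_finite (Subgroup.index_eq_zero_of_relIndex_eq_zero h)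
    have key : Nat.card P * P.relIndex C
        = Nat.card (C ⊓ P : Subgroup G) * P.relIndex C * C.relIndex S := by
      calc Nat.card P * P.relIndex C = Nat.card P * P.relIndex S := by rw [e3]
        _ = Nat.card S := e2.symm
        _ = Nat.card C * C.relIndex S := e1
        _ = Nat.card (C ⊓ P : Subgroup G) * (C ⊓ P).relIndex C * C.relIndex S := by rw [← e4]
        _ = Nat.card (C ⊓ P : Subgroup G) * P.relIndex C * C.relIndex S := by rw [e5]
    refine ⟨Nat.card (C ⊓ P : Subgroup G), ?_⟩
    apply Nat.eq_of_mul_eq_mul_right (Nat.pos_of_ne_zero hPrel0)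
    rw [key]; ring
  have hrelpi : IsPiNumber π (C.relIndex S) := isPiNumber_of_dvd π hreldvd hPpi
  -- the index of the centralizer of `x̄` in `G/P` divides `S.index`
  have hmaple : S.map (QuotientGroup.mk' P) ≤ Subgroup.centralizer {(↑x : G ⧸ P)} := by
    rw [hSdef, Subgroup.map_sup]
    apply sup_le
    · rintro y ⟨c, hc, rfl⟩
      rw [Subgroup.mem_centralizer_iff]
      rintro h rfl
      have := hc x rfl
      simp only [QuotientGroup.mk'_apply]
      rw [← QuotientGroup.mk_mul, ← QuotientGroup.mk_mul, this]
    · rintro y ⟨p, hp, rfl⟩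
      have : (QuotientGroup.mk' P) p = 1 := (QuotientGroup.eq_one_iff p).mpr hp
      rw [this]
      exact one_mem _
  have hmapidx : (S.map (QuotientGroup.mk' P)).index = S.index := by
    rw [Subgroup.index_map, QuotientGroup.ker_mk', sup_eq_left.mpr hPS,
      MonoidHom.range_eq_top.mpr (QuotientGroup.mk'_surjective P), Subgroup.index_top, mul_one]
  have hqdvd : (Subgroup.centralizer {(↑x : G ⧸ P)}).index ∣ S.index := by
    rw [← hmapidx]
    exact Subgroup.index_dvd_of_le hmaple
  calc piExp π (Subgroup.centralizer {(↑x : G ⧸ P)}).index + 1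
      ≤ piExp π S.index + piExp π (C.relIndex S) := by
        have h1 : piExp π (Subgroup.centralizer {(↑x : G ⧸ P)}).index ≤ piExp π S.index :=
          piExp_le_of_dvd π hqdvd hSidx0
        have h2 : 1 ≤ piExp π (C.relIndex S) := one_le_piExp_of_pi π hrelpi hrel0 hrel1
        omega
    _ = piExp π C.index := by rw [hdec, piExp_mul π hrel0 hSidx0]; omega

end EpsPiAux

theorem epsPi_quotient_Opi_add_one_le {G : Type*} [Group G] [Finite G]
    (π : Finset ℕ) (hsep : PiSeparable π G)
    (hOpi' : ∀ K : Subgroup G, K.Normal → IsPiPrimeNumber π (Nat.card K) → K = ⊥)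
    (P : Subgroup G) [P.Normal] (hPpi : IsPiNumber π (Nat.card P))
    (hPmax : ∀ K : Subgroup G, K.Normal → IsPiNumber π (Nat.card K) → K ≤ P)
    (hPne : P ≠ ⊤) :
    epsPi π (G ⧸ P) + 1 ≤ epsPi π G := by
  have hHH : Subgroup.centralizer (P : Set G) ≤ P :=
    EpsPiAux.hall_higman π hsep hOpi' P hPpi hPmax
  -- the defining sets of `epsPi` are nonempty and bounded above
  set sq : Set ℕ := {k | ∃ x : G ⧸ P, piExp π (Subgroup.centralizer {x}).index = k} with hsq
  set sg : Set ℕ := {k | ∃ x : G, piExp π (Subgroup.centralizer {x}).index = k} with hsg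
  have hsqr : sq = Set.range fun x : G ⧸ P => piExp π (Subgroup.centralizer {x}).index := by
    ext k; exact ⟨fun ⟨x, hx⟩ => ⟨x, hx⟩, fun ⟨x, hx⟩ => ⟨x, hx⟩⟩
  have hsgr : sg = Set.range fun x : G => piExp π (Subgroup.centralizer {x}).index := by
    ext k; exact ⟨fun ⟨x, hx⟩ => ⟨x, hx⟩, fun ⟨x, hx⟩ => ⟨x, hx⟩⟩
  have hbq : BddAbove sq := by rw [hsqr]; exact (Set.finite_range _).bddAbove
  have hbg : BddAbove sg := by rw [hsgr]; exact (Set.finite_range _).bddAbove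
  have hne : sq.Nonempty := ⟨_, 1, rfl⟩
  have hmem : epsPi π (G ⧸ P) ∈ sq := Nat.sSup_mem hne hbq
  obtain ⟨xbar, hxbar⟩ := hmem
  obtain ⟨x, rfl⟩ := QuotientGroup.mk_surjective xbar
  by_cases hxP : x ∈ P
  · -- then the image of `x` is trivial and `epsPi π (G ⧸ P) = 0`
    have hx1 : (↑x : G ⧸ P) = 1 := (QuotientGroup.eq_one_iff x).mpr hxP
    have heps0 : epsPi π (G ⧸ P) = 0 := by
      rw [← hxbar, hx1]
      have : Subgroup.centralizer ({1} : Set (G ⧸ P)) = ⊤ := by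
        rw [Subgroup.centralizer_eq_top_iff_subset]
        intro y hy
        rw [Set.mem_singleton_iff] at hy
        rw [hy]
        exact Subgroup.one_mem _
      rw [this, Subgroup.index_top]
      simp [piExp]
    obtain ⟨y, hy⟩ : ∃ y : G, y ∉ P := by
      by_contra h
      push_neg at h
      exact hPne ((Subgroup.eq_top_iff' P).mpr h)
    have := EpsPiAux.main_step π P hPpi hHH y hy
    have hle : piExp π (Subgroup.centralizer ({y} : Set G)).index ≤ epsPi π G :=
      le_csSup hbg ⟨y, rfl⟩
    omega
  · have := EpsPiAux.main_step π P hPpi hHH x hxP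
    rw [hxbar] at this
    have hle : piExp π (Subgroup.centralizer ({x} : Set G)).index ≤ epsPi π G :=
      le_csSup hbg ⟨x, rfl⟩
    omega
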